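/- Let S be a numerical set with S ≠ ℕ and define S̃ = {B(S) − s : s ∈ S, s ≤ B(S)} ∪ [B(S), ∞). Then F(S̃) ≤ B(S) − 1 ≤ F(S) − 2, and if moreover 1 ∉ S, then F(S̃) = B(S) − 1. -/
import Mathlib


open Set

def IsNumericalSet (S : Set ℕ) : Prop := 0 ∈ S ∧ Sᶜ.Finite

def IsNumericalSemigroup (S : Set ℕ) : Prop :=
  IsNumericalSet S ∧ ∀ a ∈ S, ∀ b ∈ S, a + b ∈ S

/-- The associated set `A(S) = {s ∈ S : s + S ⊆ S}`. -/
def A (S : Set ℕ) : Set ℕ := {s ∈ S | ∀ t ∈ S, s + t ∈ S}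

/-- The Frobenius number: the largest gap of `S`. -/
noncomputable def F (S : Set ℕ) : ℕ := sSup Sᶜ

/-- The base: the largest element of `S` below `F S`. -/
noncomputable def B (S : Set ℕ) : ℕ := sSup {s | s ∈ S ∧ s < F S}

/-- The multiplicity: the smallest positive element of `S`. -/
noncomputable def m (S : Set ℕ) : ℕ := sInf {s | s ∈ S ∧ 0 < s}

/-- The complement numerical set (for `S ≠ ℕ`). -/
noncomputable def Stilde (S : Set ℕ) : Set ℕ :=
  {x | ∃ s ∈ S, s ≤ B S ∧ x = B S - s} ∪ {n | B S ≤ n}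

-- The complement operation, with the convention that the complement of ℕ is ℕ.
open Classical in
noncomputable def complOp (S : Set ℕ) : Set ℕ :=
  if S = Set.univ then Set.univ else Stilde S

/-- The genus: the number of gaps. -/
noncomputable def genus (S : Set ℕ) : ℕ := Sᶜ.ncard

/-- The number of boxes with hook length 1. -/
noncomputable def c1 (S : Set ℕ) : ℕ := {n | n ∈ S ∧ n + 1 ∉ S}.ncard

/-- An atom: a positive element not a sum of two positive elements. -/
def IsAtomOf (S : Set ℕ) (a : ℕ) : Prop :=
  a ∈ S ∧ 0 < a ∧ ¬ ∃ x ∈ S, ∃ y ∈ S, 0 < x ∧ 0 < y ∧ a = x + y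

/-- A small atom: an atom smaller than the Frobenius number. -/
def IsSmallAtom (S : Set ℕ) (a : ℕ) : Prop := IsAtomOf S a ∧ a < F S

/-- The embedding dimension: the number of atoms. -/
noncomputable def numAtoms (S : Set ℕ) : ℕ := {a | IsAtomOf S a}.ncard

/-- Maximal embedding dimension. -/
def MaxED (S : Set ℕ) : Prop := numAtoms S = m S


theorem frobenius_of_complement (S : Set ℕ) (hS : IsNumericalSet S) (hne : S ≠ Set.univ) :
    F (Stilde S) ≤ B S - 1 ∧ B S - 1 ≤ F S - 2 ∧ (1 ∉ S → F (Stilde S) = B S - 1) := by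
  obtain ⟨h0, hfin⟩ := hS
  have hcne : Sᶜ.Nonempty := by rw [Set.nonempty_compl]; exact hne
  have hbdd : BddAbove Sᶜ := hfin.bddAbove
  have hFmem : F S ∉ S := Nat.sSup_mem hcne hbdd
  have hFpos : 0 < F S := Nat.pos_of_ne_zero (fun h => hFmem (h ▸ h0))
  have hTne : ({s | s ∈ S ∧ s < F S} : Set ℕ).Nonempty := ⟨0, h0, hFpos⟩
  have hTbdd : BddAbove {s | s ∈ S ∧ s < F S} := ⟨F S, fun x hx => hx.2.le⟩
  have hBmem : B S ∈ S ∧ B S < F S := Nat.sSup_mem hTne hTbdd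
  have hBlt : B S < F S := hBmem.2
  have hmem : ∀ x, x ∉ Stilde S → x < B S := by
    intro x hx
    by_contra h
    exact hx (Or.inr (not_lt.mp h))
  have h1 : F (Stilde S) ≤ B S - 1 := by
    show sSup (Stilde S)ᶜ ≤ B S - 1
    apply csSup_le'
    intro x hx
    have := hmem x hx
    omega
  refine ⟨h1, by omega, ?_⟩
  intro h1S
  rcases Nat.eq_zero_or_pos (B S) with hB0 | hBpos
  · have he : (Stilde S)ᶜ = ∅ := by
      ext x
      simp [Stilde, hB0]
    have : F (Stilde S) = 0 := by
      show sSup (Stilde S)ᶜ = 0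
      rw [he]
      exact csSup_empty
    omega
  · have hnot : B S - 1 ∉ Stilde S := by
      intro h
      rcases h with ⟨s, hs, hsle, heq⟩ | h
      · have hs1 : s = 1 := by omega
        exact h1S (hs1 ▸ hs)
      · simp only [Set.mem_setOf_eq] at h; omega
    have hbdd' : BddAbove (Stilde S)ᶜ := ⟨B S, fun x hx => (hmem x hx).le⟩
    have : B S - 1 ≤ F (Stilde S) := le_csSup hbdd' hnot
    omega
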